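/- Let ℓ, k, n ≥ 1 and 1 ≤ b ≤ k. Let (σ_1, A_1), …, (σ_ℓ, A_ℓ) be a proper configuration (σ_i ∈ {0,…,b}, A_i ⊆ {1,…,n}, σ_i + |A_i| ≤ k), and suppose gid_k((σ_i,A_i)_i) = d ≥ 1. Then there exists a minimal contraction (σ'_1, A'_1), …, (σ'_ℓ, A'_ℓ), i.e. σ'_i ≤ σ_i and A'_i ⊆ A_i for all i with Σ_{i=1}^ℓ ((σ_i − σ'_i) + (|A_i| − |A'_i|)) = 1, such that gid_k((σ'_i,A'_i)_i) = d − 1. -/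

import Mathlib

open Finset Matrix

noncomputable section

/-- The intersection `⋂_{j ∈ p} A j`, as a `Finset (Fin n)`. -/
def interSet {ℓ n : ℕ} (A : Fin ℓ → Finset (Fin n)) (p : Finset (Fin ℓ)) : Finset (Fin n) :=
  Finset.univ.filter fun x => ∀ j ∈ p, x ∈ A j

/-- The dimension-`m` null intersection property: for every partition of `{1,…,ℓ}`
(presented as a `Finpartition` of `Finset.univ : Finset (Fin ℓ)`) into nonempty parts
`P_1,…,P_s`, we have `Σ_i |⋂_{j ∈ P_i} A_j| ≤ (s-1)·m`. -/
def NullInter {ℓ n : ℕ} (m : ℕ) (A : Fin ℓ → Finset (Fin n)) : Prop :=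
  ∀ P : Finpartition (Finset.univ : Finset (Fin ℓ)),
    ∑ p ∈ P.parts, (interSet A p).card ≤ (P.parts.card - 1) * m

/-- Span of the columns of `M` indexed by `A`. -/
def colSpan {K : Type*} [Field K] {k n : ℕ} (M : Matrix (Fin k) (Fin n) K)
    (A : Finset (Fin n)) : Submodule K (Fin k → K) :=
  Submodule.span K ((fun j i => M i j) '' (A : Set (Fin n)))

/-- Span of the first `σ` columns of `M`. -/
def colSpanLT {K : Type*} [Field K] {k b : ℕ} (M : Matrix (Fin k) (Fin b) K)
    (σ : ℕ) : Submodule K (Fin k → K) :=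
  Submodule.span K ((fun j i => M i j) '' {j : Fin b | (j : ℕ) < σ})

/-- The minimum of `σ` over the set `p` (for nonempty `p`, this is `min_{j ∈ p} σ j`). -/
def partMin {ℓ : ℕ} (σ : Fin ℓ → ℕ) (p : Finset (Fin ℓ)) : ℕ :=
  sInf (σ '' (p : Set (Fin ℓ)))

/-- The generic intersection dimension `gid_m((σ_i, A_i)_i)`: the maximum over all
partitions of `{1,…,ℓ}` into nonempty parts `P_1,…,P_s` of
`-m(s-1) + Σ_i (min_{j ∈ P_i} σ_j + |⋂_{j ∈ P_i} A_j|)`. -/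
def gid {ℓ n : ℕ} (m : ℕ) (σ : Fin ℓ → ℕ) (A : Fin ℓ → Finset (Fin n)) : ℤ :=
  sSup { v : ℤ | ∃ P : Finpartition (Finset.univ : Finset (Fin ℓ)),
    v = -(m : ℤ) * ((P.parts.card : ℤ) - 1)
      + ∑ p ∈ P.parts, ((partMin σ p : ℤ) + ((interSet A p).card : ℤ)) }

namespace GidAux

variable {ℓ n : ℕ}

lemma mem_interSet {A : Fin ℓ → Finset (Fin n)} {p : Finset (Fin ℓ)} {x : Fin n} :
    x ∈ interSet A p ↔ ∀ j ∈ p, x ∈ A j := by simp [interSet]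

lemma interSet_anti {A : Fin ℓ → Finset (Fin n)} {p q : Finset (Fin ℓ)} (h : p ⊆ q) :
    interSet A q ⊆ interSet A p := by
  intro x hx; rw [mem_interSet] at *; exact fun j hj => hx j (h hj)

lemma interSet_union {A : Fin ℓ → Finset (Fin n)} {p q : Finset (Fin ℓ)} :
    interSet A (p ∪ q) = interSet A p ∩ interSet A q := by
  ext x; simp only [mem_inter, mem_interSet, Finset.mem_union]
  constructor
  · exact fun h => ⟨fun j hj => h j (Or.inl hj), fun j hj => h j (Or.inr hj)⟩
  · rintro ⟨h1, h2⟩ j (hj | hj); exacts [h1 j hj, h2 j hj]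

lemma partMin_le {σ : Fin ℓ → ℕ} {p : Finset (Fin ℓ)} {j : Fin ℓ} (hj : j ∈ p) :
    partMin σ p ≤ σ j :=
  Nat.sInf_le ⟨j, by simpa using hj, rfl⟩

lemma partMin_attained {σ : Fin ℓ → ℕ} {p : Finset (Fin ℓ)} (hp : p.Nonempty) :
    ∃ j ∈ p, partMin σ p = σ j := by
  have h : (σ '' (p : Set (Fin ℓ))).Nonempty := by
    obtain ⟨j, hj⟩ := hp; exact ⟨σ j, j, by simpa using hj, rfl⟩
  obtain ⟨j, hj, hje⟩ := Nat.sInf_mem h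
  exact ⟨j, by simpa using hj, hje.symm⟩

lemma le_partMin {σ : Fin ℓ → ℕ} {p : Finset (Fin ℓ)} {c : ℕ} (hp : p.Nonempty)
    (h : ∀ j ∈ p, c ≤ σ j) : c ≤ partMin σ p := by
  obtain ⟨j, hj, hje⟩ := partMin_attained (σ := σ) hp
  rw [hje]; exact h j hj

lemma partMin_congr {σ σ' : Fin ℓ → ℕ} {p : Finset (Fin ℓ)} (h : ∀ j ∈ p, σ j = σ' j) :
    partMin σ p = partMin σ' p := by
  unfold partMin
  congr 1
  ext c
  constructor
  · rintro ⟨j, hj, rfl⟩; exact ⟨j, hj, (h j (by simpa using hj)).symm⟩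
  · rintro ⟨j, hj, rfl⟩; exact ⟨j, hj, h j (by simpa using hj)⟩

/-- value of a single part -/
def gfun (σ : Fin ℓ → ℕ) (A : Fin ℓ → Finset (Fin n)) (p : Finset (Fin ℓ)) : ℤ :=
  (partMin σ p : ℤ) + ((interSet A p).card : ℤ)

/-- value of a partition -/
def pval (m : ℕ) (σ : Fin ℓ → ℕ) (A : Fin ℓ → Finset (Fin n))
    (P : Finpartition (Finset.univ : Finset (Fin ℓ))) : ℤ :=
  -(m : ℤ) * ((P.parts.card : ℤ) - 1) + ∑ p ∈ P.parts, gfun σ A p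

lemma gid_eq_sSup (m : ℕ) (σ : Fin ℓ → ℕ) (A : Fin ℓ → Finset (Fin n)) :
    gid m σ A = sSup { v : ℤ | ∃ P : Finpartition (Finset.univ : Finset (Fin ℓ)),
      v = pval m σ A P } := rfl

lemma gfun_supermod (σ : Fin ℓ → ℕ) (A : Fin ℓ → Finset (Fin n))
    {p q : Finset (Fin ℓ)} (h : (p ∩ q).Nonempty) :
    gfun σ A p + gfun σ A q ≤ gfun σ A (p ∪ q) + gfun σ A (p ∩ q) := by
  have hp : p.Nonempty := h.mono inter_subset_left
  have hm1 : min (partMin σ p) (partMin σ q) ≤ partMin σ (p ∪ q) := by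
    refine le_partMin (hp.mono subset_union_left) ?_
    intro j hj
    rcases Finset.mem_union.1 hj with hj | hj
    · exact le_trans (min_le_left _ _) (partMin_le hj)
    · exact le_trans (min_le_right _ _) (partMin_le hj)
  have hm2 : partMin σ p ≤ partMin σ (p ∩ q) :=
    le_partMin h fun j hj => partMin_le (Finset.mem_inter.1 hj).1
  have hm3 : partMin σ q ≤ partMin σ (p ∩ q) :=
    le_partMin h fun j hj => partMin_le (Finset.mem_inter.1 hj).2
  have hmin : partMin σ p + partMin σ q ≤ partMin σ (p ∪ q) + partMin σ (p ∩ q) := by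
    rcases le_total (partMin σ p) (partMin σ q) with hc | hc
    · have := hm1; rw [min_eq_left hc] at this; omega
    · have := hm1; rw [min_eq_right hc] at this; omega
  have hsub : interSet A p ∪ interSet A q ⊆ interSet A (p ∩ q) := by
    intro x hx
    rcases Finset.mem_union.1 hx with hx | hx <;>
      exact interSet_anti (by simp) hx
  have hcard : (interSet A p).card + (interSet A q).card
      ≤ (interSet A (p ∪ q)).card + (interSet A (p ∩ q)).card := by
    have h1 := Finset.card_union_add_card_inter (interSet A p) (interSet A q)
    have h2 := Finset.card_le_card hsub
    rw [interSet_union]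
    omega
  unfold gfun
  omega

lemma chain (σ : Fin ℓ → ℕ) (A : Fin ℓ → Finset (Fin n)) (q : Finset (Fin ℓ))
    (T : Finset (Finset (Fin ℓ))) (hne : ∀ p ∈ T, (p ∩ q).Nonempty)
    (hdisj : (T : Set (Finset (Fin ℓ))).PairwiseDisjoint id) :
    gfun σ A q + ∑ p ∈ T, gfun σ A p
      ≤ gfun σ A (q ∪ T.sup id) + ∑ p ∈ T, gfun σ A (p ∩ q) := by
  induction T using Finset.induction_on with
  | empty => simp
  | @insert p T' hpT ih =>
      have hd' : (T' : Set (Finset (Fin ℓ))).PairwiseDisjoint id :=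
        hdisj.subset (by intro x hx; simp only [Finset.coe_insert, Set.mem_insert_iff]; right; exact hx)
      have ihh := ih (fun r hr => hne r (mem_insert_of_mem hr)) hd'
      have hdisjp : Disjoint p (T'.sup id) := by
        rw [Finset.disjoint_sup_right]
        intro r hr
        exact hdisj (by simp) (by simp [hr]) (fun hrp => hpT (hrp ▸ hr))
      have hint : (q ∪ T'.sup id) ∩ p = p ∩ q := by
        rw [Finset.union_inter_distrib_right]
        rw [Finset.disjoint_iff_inter_eq_empty] at hdisjp
        rw [Finset.inter_comm (T'.sup id) p, hdisjp, Finset.union_empty,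
          Finset.inter_comm]
      have hsm := gfun_supermod σ A (p := q ∪ T'.sup id) (q := p)
        (by rw [hint]; exact hne p (mem_insert_self _ _))
      rw [hint] at hsm
      have hsup : q ∪ (insert p T').sup id = (q ∪ T'.sup id) ∪ p := by
        rw [Finset.sup_insert]
        change q ∪ (p ∪ T'.sup id) = _
        rw [Finset.union_comm p (T'.sup id), ← Finset.union_assoc]
      rw [Finset.sum_insert hpT, Finset.sum_insert hpT, hsup]
      linarith

lemma merge_step (m : ℕ) (σ : Fin ℓ → ℕ) (A : Fin ℓ → Finset (Fin n)) (D : ℤ)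
    (hub : ∀ P : Finpartition (Finset.univ : Finset (Fin ℓ)), pval m σ A P ≤ D)
    (J Q : Finpartition (Finset.univ : Finset (Fin ℓ)))
    (hJ : pval m σ A J = D) (hQ : pval m σ A Q = D)
    {q : Finset (Fin ℓ)} (hq : q ∈ Q.parts)
    (h2 : 2 ≤ (J.parts.filter fun p => (p ∩ q).Nonempty).card) :
    ∃ P' : Finpartition (Finset.univ : Finset (Fin ℓ)),
      pval m σ A P' = D ∧ P'.parts.card < J.parts.card := by
  classical
  set T : Finset (Finset (Fin ℓ)) := J.parts.filter fun p => (p ∩ q).Nonempty with hT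
  have hTJ : T ⊆ J.parts := filter_subset _ _
  have hTne : ∀ p ∈ T, (p ∩ q).Nonempty := fun p hp => (mem_filter.1 hp).2
  have hTdisj : (T : Set (Finset (Fin ℓ))).PairwiseDisjoint id :=
    J.disjoint.subset (by exact_mod_cast hTJ)
  set u : Finset (Fin ℓ) := T.sup id with hu
  have hqu : q ⊆ u := by
    intro x hx
    obtain ⟨p, hp, hxp⟩ := J.exists_mem (mem_univ x)
    have hpT : p ∈ T := mem_filter.2 ⟨hp, ⟨x, mem_inter.2 ⟨hxp, hx⟩⟩⟩
    exact (Finset.le_sup (f := id) hpT : p ⊆ u) hxp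
  have hqne : q.Nonempty := Finpartition.nonempty_of_mem_parts Q hq
  have hune : (u ∩ q).Nonempty := hqne.mono (subset_inter hqu subset_rfl |>.trans (by rfl))
  have huNot : u ∉ J.parts \ T := by
    intro hmem
    rcases mem_sdiff.1 hmem with ⟨hu1, hu2⟩
    exact hu2 (mem_filter.2 ⟨hu1, hune⟩)
  have hPsupIndep : ((J.parts \ T) ∪ {u}).SupIndep id := by
    rw [Finset.supIndep_iff_pairwiseDisjoint]
    intro x hx y hy hxy
    simp only [coe_union, coe_sdiff, coe_singleton, Set.mem_union, Set.mem_diff,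
      Set.mem_singleton_iff] at hx hy
    have hdisj_u_part : ∀ p ∈ J.parts, p ∉ T → Disjoint u p := by
      intro p hp hpT
      rw [hu, Finset.disjoint_sup_left]
      intro r hr
      exact J.disjoint (hTJ hr) hp (fun h => hpT (h ▸ hr))
    rcases hx with ⟨hx1, hx2⟩ | rfl <;> rcases hy with ⟨hy1, hy2⟩ | rfl
    · exact J.disjoint hx1 hy1 hxy
    · exact (hdisj_u_part x hx1 hx2).symm
    · exact hdisj_u_part y hy1 hy2
    · exact absurd rfl hxy
  have hPsup : ((J.parts \ T) ∪ {u}).sup id = (Finset.univ : Finset (Fin ℓ)) := by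
    rw [Finset.sup_union, Finset.sup_singleton]
    show (J.parts \ T).sup id ⊔ u = _
    rw [hu, ← Finset.sup_union, Finset.sdiff_union_of_subset hTJ, J.sup_parts]
  have hPnotbot : ⊥ ∉ (J.parts \ T) ∪ {u} := by
    rw [Finset.mem_union]
    rintro (h | h)
    · exact J.bot_notMem (mem_sdiff.1 h).1
    · rw [Finset.mem_singleton] at h
      obtain ⟨x, hx⟩ := hune
      rw [← h] at hx
      simp at hx
  set P' : Finpartition (Finset.univ : Finset (Fin ℓ)) :=
    ⟨(J.parts \ T) ∪ {u}, hPsupIndep, hPsup, hPnotbot⟩ with hP'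
  have hpieces_ne : ∀ p ∈ T, (p ∩ q) ≠ ⊥ := by
    intro p hp h
    have := hTne p hp
    rw [h] at this; simp at this
  have himinj : Set.InjOn (fun p => p ∩ q) (T : Set (Finset (Fin ℓ))) := by
    intro p1 h1 p2 h2 he
    simp only at he
    by_contra hne12
    obtain ⟨x, hx⟩ := hTne p1 (by exact_mod_cast h1)
    have hx2 : x ∈ p2 ∩ q := he ▸ hx
    have hd : Disjoint p1 p2 := hTdisj h1 h2 hne12
    exact (Finset.disjoint_left.1 hd (mem_inter.1 hx).1) (mem_inter.1 hx2).1
  set pieces : Finset (Finset (Fin ℓ)) := T.image (fun p => p ∩ q) with hpieces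
  have hpiece_sub_q : ∀ r ∈ pieces, r ⊆ q := by
    intro r hr; obtain ⟨p, hp, rfl⟩ := mem_image.1 hr; exact inter_subset_right
  have hErasePieces_disj : Disjoint (Q.parts.erase q) pieces := by
    rw [Finset.disjoint_right]
    intro r hr hre
    obtain ⟨p, hp, rfl⟩ := mem_image.1 hr
    have hrparts : (p ∩ q) ∈ Q.parts := Finset.mem_of_mem_erase hre
    have hrneq : (p ∩ q) ≠ q := Finset.ne_of_mem_erase hre
    have hd := Q.disjoint hrparts hq hrneq
    obtain ⟨x, hx⟩ := hTne p hp
    exact (Finset.disjoint_left.1 hd hx) (mem_inter.1 hx).2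
  have hQsupIndep : ((Q.parts.erase q) ∪ pieces).SupIndep id := by
    rw [Finset.supIndep_iff_pairwiseDisjoint]
    intro x hx y hy hxy
    simp only [coe_union, Set.mem_union, mem_coe] at hx hy
    have hpe : ∀ r ∈ pieces, ∀ p' ∈ Q.parts.erase q, Disjoint r p' := by
      intro r hr p' hp'
      have hd : Disjoint q p' :=
        (Q.disjoint (Finset.mem_of_mem_erase hp') hq (Finset.ne_of_mem_erase hp')).symm
      exact hd.mono_left (hpiece_sub_q r hr)
    rcases hx with hx | hx <;> rcases hy with hy | hy
    · exact Q.disjoint (Finset.mem_of_mem_erase hx) (Finset.mem_of_mem_erase hy) hxy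
    · exact (hpe y hy x hx).symm
    · exact hpe x hx y hy
    · obtain ⟨p1, hp1, rfl⟩ := mem_image.1 hx
      obtain ⟨p2, hp2, rfl⟩ := mem_image.1 hy
      have hne12 : p1 ≠ p2 := fun h => hxy (by rw [h])
      have hd : Disjoint p1 p2 := hTdisj (by exact_mod_cast hp1) (by exact_mod_cast hp2) hne12
      exact (hd.mono inter_subset_left inter_subset_left : Disjoint (p1 ∩ q) (p2 ∩ q))
  have hsup_pieces : pieces.sup id = q := by
    apply le_antisymm
    · exact Finset.sup_le (fun r hr => hpiece_sub_q r hr)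
    · show q ⊆ pieces.sup id
      intro x hx
      obtain ⟨p, hp, hxp⟩ := J.exists_mem (mem_univ x)
      have hpT : p ∈ T := mem_filter.2 ⟨hp, ⟨x, mem_inter.2 ⟨hxp, hx⟩⟩⟩
      have hmem : p ∩ q ∈ pieces := mem_image_of_mem _ hpT
      exact (Finset.le_sup (f := id) hmem : p ∩ q ⊆ _) (mem_inter.2 ⟨hxp, hx⟩)
  have hQsup : ((Q.parts.erase q) ∪ pieces).sup id = (Finset.univ : Finset (Fin ℓ)) := by
    rw [Finset.sup_union, hsup_pieces]
    have hQs : Q.parts.sup id = Finset.univ := Q.sup_parts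
    rw [← Finset.insert_erase hq, Finset.sup_insert] at hQs
    rw [sup_comm]
    exact hQs
  have hQnotbot : ⊥ ∉ (Q.parts.erase q) ∪ pieces := by
    rw [Finset.mem_union]
    rintro (h | h)
    · exact Q.bot_notMem (Finset.mem_of_mem_erase h)
    · obtain ⟨p, hp, hpe⟩ := mem_image.1 h
      exact hpieces_ne p hp hpe
  set Q'' : Finpartition (Finset.univ : Finset (Fin ℓ)) :=
    ⟨(Q.parts.erase q) ∪ pieces, hQsupIndep, hQsup, hQnotbot⟩ with hQ''def
  have hcP' : P'.parts.card = (J.parts \ T).card + 1 := by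
    show ((J.parts \ T) ∪ {u}).card = _
    rw [Finset.card_union_of_disjoint (Finset.disjoint_singleton_right.2 huNot)]
    simp
  have hcJ : (J.parts \ T).card + T.card = J.parts.card :=
    Finset.card_sdiff_add_card_eq_card hTJ
  have hcQ : (Q.parts.erase q).card + 1 = Q.parts.card := Finset.card_erase_add_one hq
  have hcQ'' : Q''.parts.card = (Q.parts.erase q).card + T.card := by
    show ((Q.parts.erase q) ∪ pieces).card = _
    rw [Finset.card_union_of_disjoint hErasePieces_disj, hpieces,
      Finset.card_image_of_injOn himinj]
  have hsumP' : ∑ p ∈ P'.parts, gfun σ A p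
      = ∑ p ∈ J.parts \ T, gfun σ A p + gfun σ A u := by
    show ∑ p ∈ (J.parts \ T) ∪ {u}, _ = _
    rw [Finset.sum_union (Finset.disjoint_singleton_right.2 huNot), Finset.sum_singleton]
  have hsumJ : ∑ p ∈ J.parts \ T, gfun σ A p + ∑ p ∈ T, gfun σ A p
      = ∑ p ∈ J.parts, gfun σ A p := Finset.sum_sdiff hTJ
  have hsumQ'' : ∑ p ∈ Q''.parts, gfun σ A p
      = ∑ p ∈ Q.parts.erase q, gfun σ A p + ∑ p ∈ T, gfun σ A (p ∩ q) := by
    show ∑ p ∈ (Q.parts.erase q) ∪ pieces, _ = _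
    rw [Finset.sum_union hErasePieces_disj, hpieces,
      Finset.sum_image (fun x hx y hy h => himinj (by exact_mod_cast hx) (by exact_mod_cast hy) h)]
  have hsumQ : ∑ p ∈ Q.parts.erase q, gfun σ A p + gfun σ A q
      = ∑ p ∈ Q.parts, gfun σ A p := Finset.sum_erase_add _ _ hq
  have hchain := chain σ A q T hTne hTdisj
  have huq : q ∪ T.sup id = u := Finset.union_eq_right.2 hqu
  rw [huq] at hchain
  have hQ''le := hub Q''
  have ht2 : 2 ≤ T.card := h2
  have hP'ge : D ≤ pval m σ A P' := by
    unfold pval at hJ hQ hQ''le ⊢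
    rw [hsumP']
    rw [hsumQ''] at hQ''le
    rw [← hsumJ] at hJ
    rw [← hsumQ] at hQ
    rw [hcP', hcQ''] at *
    rw [← hcJ] at hJ
    rw [← hcQ] at hQ
    push_cast at hJ hQ hQ''le ⊢
    nlinarith [hchain]
  refine ⟨P', le_antisymm (hub P') hP'ge, ?_⟩
  omega

lemma filter_part_card (P : Finpartition (Finset.univ : Finset (Fin ℓ))) (i : Fin ℓ) :
    (P.parts.filter fun p => i ∈ p).card = 1 := by
  classical
  rw [Finset.card_eq_one]
  refine ⟨P.part i, ?_⟩
  ext r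
  simp only [mem_filter, mem_singleton]
  constructor
  · rintro ⟨hr, hir⟩
    exact (P.part_eq_of_mem hr hir).symm
  · rintro rfl
    exact ⟨P.part_mem.2 (mem_univ i), P.mem_part (mem_univ i)⟩

lemma sum_indicator (P : Finpartition (Finset.univ : Finset (Fin ℓ))) (i : Fin ℓ) :
    ∑ p ∈ P.parts, (if i ∈ p then (1 : ℤ) else 0) = 1 := by
  classical
  rw [Finset.sum_boole]
  rw [filter_part_card]
  norm_num

lemma gfun_mono {σ σ' : Fin ℓ → ℕ} {A A' : Fin ℓ → Finset (Fin n)}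
    (hσ : ∀ i, σ' i ≤ σ i) (hA : ∀ i, A' i ⊆ A i) {p : Finset (Fin ℓ)} (hp : p.Nonempty) :
    gfun σ' A' p ≤ gfun σ A p := by
  obtain ⟨j, hj, hje⟩ := partMin_attained (σ := σ) hp
  have h1 : partMin σ' p ≤ partMin σ p := by
    calc partMin σ' p ≤ σ' j := partMin_le hj
      _ ≤ σ j := hσ j
      _ = partMin σ p := hje.symm
  have h2 : interSet A' p ⊆ interSet A p := by
    intro x hx; rw [mem_interSet] at *; exact fun j hj => hA j (hx j hj)
  have := Finset.card_le_card h2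
  unfold gfun
  omega

lemma pval_mono (m : ℕ) {σ σ' : Fin ℓ → ℕ} {A A' : Fin ℓ → Finset (Fin n)}
    (hσ : ∀ i, σ' i ≤ σ i) (hA : ∀ i, A' i ⊆ A i)
    (P : Finpartition (Finset.univ : Finset (Fin ℓ))) :
    pval m σ' A' P ≤ pval m σ A P := by
  unfold pval
  have := Finset.sum_le_sum (s := P.parts)
    (fun p hp => gfun_mono hσ hA (P.nonempty_of_mem_parts hp))
  linarith

lemma pval_drop (m : ℕ) {σ σ' : Fin ℓ → ℕ} {A A' : Fin ℓ → Finset (Fin n)} (i₀ : Fin ℓ)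
    (h1 : ∀ p : Finset (Fin ℓ), p.Nonempty → i₀ ∉ p → gfun σ A p ≤ gfun σ' A' p)
    (h2 : ∀ p : Finset (Fin ℓ), p.Nonempty → i₀ ∈ p → gfun σ A p - 1 ≤ gfun σ' A' p)
    (P : Finpartition (Finset.univ : Finset (Fin ℓ))) :
    pval m σ A P - 1 ≤ pval m σ' A' P := by
  classical
  have hb : ∑ p ∈ P.parts, (gfun σ A p - gfun σ' A' p)
      ≤ ∑ p ∈ P.parts, (if i₀ ∈ p then (1 : ℤ) else 0) := by
    refine Finset.sum_le_sum (fun p hp => ?_)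
    by_cases hip : i₀ ∈ p
    · simp only [hip, if_true]
      have := h2 p (P.nonempty_of_mem_parts hp) hip; linarith
    · simp only [hip, if_false]
      have := h1 p (P.nonempty_of_mem_parts hp) hip; linarith
  rw [sum_indicator P i₀, Finset.sum_sub_distrib] at hb
  unfold pval
  linarith

lemma pval_strict (m : ℕ) {σ σ' : Fin ℓ → ℕ} {A A' : Fin ℓ → Finset (Fin n)} (i₀ : Fin ℓ)
    (hσ : ∀ i, σ' i ≤ σ i) (hA : ∀ i, A' i ⊆ A i)
    (P : Finpartition (Finset.univ : Finset (Fin ℓ)))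
    {p₀ : Finset (Fin ℓ)} (hp₀ : p₀ ∈ P.parts)
    (hs : gfun σ' A' p₀ ≤ gfun σ A p₀ - 1) :
    pval m σ' A' P ≤ pval m σ A P - 1 := by
  classical
  have hsum : ∑ p ∈ P.parts, gfun σ' A' p ≤ ∑ p ∈ P.parts, gfun σ A p - 1 := by
    rw [← Finset.sum_erase_add _ _ hp₀, ← Finset.sum_erase_add _ (gfun σ A) hp₀]
    have := Finset.sum_le_sum (s := P.parts.erase p₀)
      (fun p hp => gfun_mono hσ hA (P.nonempty_of_mem_parts (Finset.mem_of_mem_erase hp)))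
    linarith
  unfold pval
  linarith

lemma gid_result (m : ℕ) (σ σ' : Fin ℓ → ℕ) (A A' : Fin ℓ → Finset (Fin n)) (D : ℤ)
    (hub : ∀ P : Finpartition (Finset.univ : Finset (Fin ℓ)), pval m σ A P ≤ D)
    (hmono : ∀ P : Finpartition (Finset.univ : Finset (Fin ℓ)), pval m σ' A' P ≤ pval m σ A P)
    (hdrop : ∀ P : Finpartition (Finset.univ : Finset (Fin ℓ)), pval m σ A P - 1 ≤ pval m σ' A' P)
    (hstrict : ∀ P : Finpartition (Finset.univ : Finset (Fin ℓ)),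
      pval m σ A P = D → pval m σ' A' P ≤ D - 1)
    (J : Finpartition (Finset.univ : Finset (Fin ℓ))) (hJ : pval m σ A J = D) :
    gid m σ' A' = D - 1 := by
  have hub' : ∀ P : Finpartition (Finset.univ : Finset (Fin ℓ)), pval m σ' A' P ≤ D - 1 := by
    intro P
    by_cases h : pval m σ A P = D
    · exact hstrict P h
    · have h1 := hub P; have h2 := hmono P; omega
  have hJ' : pval m σ' A' J = D - 1 :=
    le_antisymm (hub' J) (by have := hdrop J; omega)
  rw [gid_eq_sSup]
  apply le_antisymm
  · refine csSup_le ⟨_, J, rfl⟩ ?_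
    rintro v ⟨P, rfl⟩; exact hub' P
  · exact le_csSup ⟨D - 1, by rintro v ⟨P, rfl⟩; exact hub' P⟩ ⟨J, hJ'.symm⟩

end GidAux

open GidAux

/-- Minimal contractions decrease `gid` by exactly one: if a proper configuration has
`gid_k = d ≥ 1`, there is a minimal contraction with `gid_k = d - 1`. -/
theorem exists_minimal_contraction
    (ℓ k n b : ℕ) (hℓ : 1 ≤ ℓ) (hk : 1 ≤ k) (hn : 1 ≤ n) (hb : 1 ≤ b) (hbk : b ≤ k)
    (σ : Fin ℓ → ℕ) (A : Fin ℓ → Finset (Fin n))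
    (hσ : ∀ i, σ i ≤ b) (hproper : ∀ i, σ i + (A i).card ≤ k)
    (d : ℕ) (hd : 1 ≤ d) (hgid : gid k σ A = (d : ℤ)) :
    ∃ (σ' : Fin ℓ → ℕ) (A' : Fin ℓ → Finset (Fin n)),
      (∀ i, σ' i ≤ σ i) ∧ (∀ i, A' i ⊆ A i) ∧
      (∑ i, ((σ i - σ' i) + ((A i).card - (A' i).card))) = 1 ∧
      gid k σ' A' = (d : ℤ) - 1 := by
  classical
  rw [gid_eq_sSup] at hgid
  set S := { v : ℤ | ∃ P : Finpartition (Finset.univ : Finset (Fin ℓ)), v = pval k σ A P }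
    with hS
  have hSfin : S.Finite := by
    have : S = Set.range (pval k σ A) := by
      ext v; constructor
      · rintro ⟨P, rfl⟩; exact ⟨P, rfl⟩
      · rintro ⟨P, rfl⟩; exact ⟨P, rfl⟩
    rw [this]; exact Set.finite_range _
  have huniv_ne : (Finset.univ : Finset (Fin ℓ)) ≠ ⊥ := by
    have : (0 : ℕ) < ℓ := hℓ
    have : Nonempty (Fin ℓ) := ⟨⟨0, this⟩⟩
    simpa using Finset.univ_nonempty.ne_empty
  have hSne : S.Nonempty := ⟨_, Finpartition.indiscrete huniv_ne, rfl⟩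
  have hub : ∀ P : Finpartition (Finset.univ : Finset (Fin ℓ)), pval k σ A P ≤ (d : ℤ) := by
    intro P
    rw [← hgid]
    exact le_csSup hSfin.bddAbove ⟨P, rfl⟩
  have hmaxex : ∃ J : Finpartition (Finset.univ : Finset (Fin ℓ)), pval k σ A J = (d : ℤ) := by
    have := hSne.csSup_mem hSfin
    rw [hgid] at this
    obtain ⟨J, hJ⟩ := this
    exact ⟨J, hJ.symm⟩
  obtain ⟨J0, hJ0⟩ := hmaxex
  set C := { c : ℕ | ∃ P : Finpartition (Finset.univ : Finset (Fin ℓ)),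
    pval k σ A P = (d : ℤ) ∧ P.parts.card = c } with hC
  have hCne : C.Nonempty := ⟨J0.parts.card, J0, hJ0, rfl⟩
  obtain ⟨J, hJmax, hJcard⟩ := Nat.sInf_mem hCne
  have hminJ : ∀ P : Finpartition (Finset.univ : Finset (Fin ℓ)),
      pval k σ A P = (d : ℤ) → J.parts.card ≤ P.parts.card := by
    intro P hP
    rw [hJcard]
    exact Nat.sInf_le ⟨P, hP, rfl⟩
  -- every part of a maximizer meeting a part of J is contained in it
  have hsub : ∀ Q : Finpartition (Finset.univ : Finset (Fin ℓ)), pval k σ A Q = (d : ℤ) →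
      ∀ q ∈ Q.parts, ∀ p ∈ J.parts, (p ∩ q).Nonempty → q ⊆ p := by
    intro Q hQ q hq p hp hpq
    set T := J.parts.filter fun r => (r ∩ q).Nonempty with hTdef
    have hT1 : T.card ≤ 1 := by
      by_contra h
      push_neg at h
      obtain ⟨P', hP', hc⟩ := merge_step k σ A (d : ℤ) hub J Q hJmax hQ hq (by rw [← hTdef]; omega)
      exact absurd (hminJ P' hP') (by omega)
    have hpT : p ∈ T := mem_filter.2 ⟨hp, hpq⟩
    intro x hx
    obtain ⟨r, hr, hxr⟩ := J.exists_mem (mem_univ x)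
    have hrT : r ∈ T := mem_filter.2 ⟨hr, ⟨x, mem_inter.2 ⟨hxr, hx⟩⟩⟩
    have : r = p := by
      by_contra hne
      have : 2 ≤ T.card := by
        have := Finset.one_lt_card.2 ⟨r, hrT, p, hpT, hne⟩
        omega
      omega
    exact this ▸ hxr
  -- find a good part of J
  have hJparts_ne : J.parts.Nonempty := J.parts_nonempty huniv_ne
  have hgood : ∃ phat ∈ J.parts, 1 ≤ gfun σ A phat := by
    by_contra h
    push_neg at h
    have hsum0 : ∑ p ∈ J.parts, gfun σ A p ≤ 0 :=
      Finset.sum_nonpos (fun p hp => by have := h p hp; omega)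
    have hJc : 1 ≤ J.parts.card := Finset.card_pos.2 hJparts_ne
    unfold pval at hJmax
    have hk0 : (0 : ℤ) ≤ (k : ℤ) * ((J.parts.card : ℤ) - 1) := by
      apply mul_nonneg (Int.natCast_nonneg k)
      have : (1 : ℤ) ≤ (J.parts.card : ℤ) := by exact_mod_cast hJc
      linarith
    have hd1 : (1 : ℤ) ≤ (d : ℤ) := by exact_mod_cast hd
    linarith [hJmax]
  obtain ⟨qhat, hqhat, hqhatg⟩ := hgood
  have hqhatne : qhat.Nonempty := J.nonempty_of_mem_parts hqhat
  -- key containment for maximizers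
  have hkey : ∀ Q : Finpartition (Finset.univ : Finset (Fin ℓ)), pval k σ A Q = (d : ℤ) →
      ∀ i ∈ qhat, ∀ q ∈ Q.parts, i ∈ q → q ⊆ qhat := by
    intro Q hQ i hi q hqQ hiq
    exact hsub Q hQ q hqQ qhat hqhat ⟨i, mem_inter.2 ⟨hi, hiq⟩⟩
  by_cases hxcase : (interSet A qhat).Nonempty
  · -- remove an element of the common intersection
    obtain ⟨x, hx⟩ := hxcase
    obtain ⟨i₀, hi₀⟩ := hqhatne
    have hxAi₀ : x ∈ A i₀ := (mem_interSet.1 hx) i₀ hi₀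
    set A' : Fin ℓ → Finset (Fin n) := Function.update A i₀ ((A i₀).erase x) with hA'
    have hA'sub : ∀ i, A' i ⊆ A i := by
      intro i
      by_cases h : i = i₀
      · subst h; rw [hA', Function.update_self]; exact Finset.erase_subset _ _
      · rw [hA', Function.update_of_ne h]
    have hA'eq : ∀ j, j ≠ i₀ → A' j = A j := fun j hj => by
      rw [hA', Function.update_of_ne hj]
    have hinter_eq : ∀ p : Finset (Fin ℓ), i₀ ∉ p → interSet A' p = interSet A p := by
      intro p hip
      ext y
      rw [mem_interSet, mem_interSet]
      constructor <;> intro hy j hj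
      · have := hy j hj; rwa [hA'eq j (fun h => hip (h ▸ hj))] at this
      · rw [hA'eq j (fun h => hip (h ▸ hj))]; exact hy j hj
    have hgfun_eq : ∀ p : Finset (Fin ℓ), p.Nonempty → i₀ ∉ p →
        gfun σ A p ≤ gfun σ A' p := by
      intro p _ hip
      unfold gfun
      rw [hinter_eq p hip]
    have hgfun_drop : ∀ p : Finset (Fin ℓ), p.Nonempty → i₀ ∈ p →
        gfun σ A p - 1 ≤ gfun σ A' p := by
      intro p _ hip
      have hss : (interSet A p).erase x ⊆ interSet A' p := by
        intro y hy
        rw [mem_interSet]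
        intro j hj
        have hyx : y ≠ x := Finset.ne_of_mem_erase hy
        have hyA : y ∈ A j := (mem_interSet.1 (Finset.mem_of_mem_erase hy)) j hj
        by_cases h : j = i₀
        · subst h; rw [hA', Function.update_self]; exact Finset.mem_erase.2 ⟨hyx, hyA⟩
        · rw [hA'eq j h]; exact hyA
      have h1 : (interSet A p).card - 1 ≤ ((interSet A p).erase x).card :=
        Finset.pred_card_le_card_erase
      have h2 := Finset.card_le_card hss
      unfold gfun
      omega
    have hgfun_strict : ∀ p : Finset (Fin ℓ), i₀ ∈ p → x ∈ interSet A p →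
        gfun σ A' p ≤ gfun σ A p - 1 := by
      intro p hip hxp
      have hss : interSet A' p ⊆ (interSet A p).erase x := by
        intro y hy
        have hyAi₀ : y ∈ A' i₀ := (mem_interSet.1 hy) i₀ hip
        rw [hA', Function.update_self] at hyAi₀
        refine Finset.mem_erase.2 ⟨(Finset.mem_erase.1 hyAi₀).1, ?_⟩
        rw [mem_interSet]
        exact fun j hj => hA'sub j ((mem_interSet.1 hy) j hj)
      have h1 := Finset.card_le_card hss
      rw [Finset.card_erase_of_mem hxp] at h1
      have h2 : 1 ≤ (interSet A p).card := Finset.card_pos.2 ⟨x, hxp⟩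
      unfold gfun
      omega
    refine ⟨σ, A', fun i => le_refl _, hA'sub, ?_, ?_⟩
    · rw [Finset.sum_eq_single_of_mem i₀ (mem_univ i₀)]
      · rw [hA', Function.update_self, Finset.card_erase_of_mem hxAi₀]
        have : 1 ≤ (A i₀).card := Finset.card_pos.2 ⟨x, hxAi₀⟩
        omega
      · intro j _ hj
        rw [hA'eq j hj]
        omega
    · refine gid_result k σ σ A A' (d : ℤ) hub
        (pval_mono k (fun i => le_refl _) hA'sub)
        (pval_drop k i₀ hgfun_eq hgfun_drop) ?_ J hJmax
      intro P hP
      have hp₀ : P.part i₀ ∈ P.parts := P.part_mem.2 (mem_univ i₀)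
      have hip₀ : i₀ ∈ P.part i₀ := P.mem_part (mem_univ i₀)
      have hpsub : P.part i₀ ⊆ qhat := hkey P hP i₀ hi₀ (P.part i₀) hp₀ hip₀
      have hxp : x ∈ interSet A (P.part i₀) := interSet_anti hpsub hx
      have := pval_strict k i₀ (fun i => le_refl _) hA'sub P hp₀
        (hgfun_strict (P.part i₀) hip₀ hxp)
      rw [hP] at this
      exact this
  · -- decrease σ at the minimizing index
    have hcard0 : (interSet A qhat).card = 0 := by
      rw [Finset.card_eq_zero]
      exact Finset.not_nonempty_iff_eq_empty.1 hxcase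
    have hmin1 : 1 ≤ partMin σ qhat := by
      unfold gfun at hqhatg
      rw [hcard0] at hqhatg
      omega
    obtain ⟨i₀, hi₀, hi₀min⟩ := partMin_attained (σ := σ) hqhatne
    have hσi₀ : 1 ≤ σ i₀ := hi₀min ▸ hmin1
    set σ' : Fin ℓ → ℕ := Function.update σ i₀ (σ i₀ - 1) with hσ'
    have hσ'le : ∀ i, σ' i ≤ σ i := by
      intro i
      by_cases h : i = i₀
      · subst h; rw [hσ', Function.update_self]; omega
      · rw [hσ', Function.update_of_ne h]
    have hσ'eq : ∀ j, j ≠ i₀ → σ' j = σ j := fun j hj => by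
      rw [hσ', Function.update_of_ne hj]
    have hgfun_eq : ∀ p : Finset (Fin ℓ), p.Nonempty → i₀ ∉ p →
        gfun σ A p ≤ gfun σ' A p := by
      intro p _ hip
      unfold gfun
      rw [partMin_congr (fun j hj => (hσ'eq j (fun h => hip (h ▸ hj))).symm)]
    have hgfun_drop : ∀ p : Finset (Fin ℓ), p.Nonempty → i₀ ∈ p →
        gfun σ A p - 1 ≤ gfun σ' A p := by
      intro p hpne hip
      have h1 : partMin σ p - 1 ≤ partMin σ' p := by
        refine le_partMin hpne ?_
        intro j hj
        by_cases h : j = i₀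
        · subst h
          rw [hσ', Function.update_self]
          have := partMin_le (σ := σ) hj
          omega
        · rw [hσ'eq j h]
          have := partMin_le (σ := σ) hj
          omega
      unfold gfun
      omega
    have hgfun_strict : ∀ p : Finset (Fin ℓ), i₀ ∈ p → p ⊆ qhat →
        gfun σ' A p ≤ gfun σ A p - 1 := by
      intro p hip hpsub
      have hminp : partMin σ p = σ i₀ := by
        apply le_antisymm (partMin_le hip)
        refine le_partMin ⟨i₀, hip⟩ ?_
        intro j hj
        rw [← hi₀min]
        exact partMin_le (hpsub hj)
      have h1 : partMin σ' p ≤ σ i₀ - 1 := by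
        have := partMin_le (σ := σ') hip
        rwa [hσ', Function.update_self] at this
      unfold gfun
      omega
    refine ⟨σ', A, hσ'le, fun i => subset_rfl, ?_, ?_⟩
    · rw [Finset.sum_eq_single_of_mem i₀ (mem_univ i₀)]
      · rw [hσ', Function.update_self]
        omega
      · intro j _ hj
        rw [hσ'eq j hj]
        omega
    · refine gid_result k σ σ' A A (d : ℤ) hub
        (pval_mono k hσ'le (fun i => subset_rfl))
        (pval_drop k i₀ hgfun_eq hgfun_drop) ?_ J hJmax
      intro P hP
      have hp₀ : P.part i₀ ∈ P.parts := P.part_mem.2 (mem_univ i₀)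
      have hip₀ : i₀ ∈ P.part i₀ := P.mem_part (mem_univ i₀)
      have hpsub : P.part i₀ ⊆ qhat := hkey P hP i₀ hi₀ (P.part i₀) hp₀ hip₀
      have := pval_strict k i₀ hσ'le (fun i => subset_rfl) P hp₀
        (hgfun_strict (P.part i₀) hip₀ hpsub)
      rw [hP] at this
      exact this
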